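/- arXiv:0708.2307 — 2 statements merged into one kernel-verified Lean document; each statement's English description precedes it below -/
import Mathlib

section
/- Let n, t be positive integers, let z, ξ be complex numbers, and let F ∈ ℂ[T] be a nonzero polynomial of degree at most n. For each integer ℓ ≥ 0, the polynomial F̃(T) = (T−z)^ℓ F(T) satisfies max_{0 ≤ j < t} |F̃^{[j]}(ξ)| / ‖F̃‖ ≤ e^{deg(F̃)} (2+|ξ|)^ℓ · max_{0 ≤ j < t} |F^{[j]}(ξ)| / ‖F‖. Moreover, when z = 0 the factor e^{deg(F̃)} can be omitted. -/
open Polynomial Finset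

/-- The norm of a complex polynomial: the maximum of the absolute values of its coefficients. -/
noncomputable def cnorm (P : Polynomial ℂ) : ℝ :=
  (Finset.range (P.natDegree + 1)).sup' Finset.nonempty_range_add_one fun i =>
    ‖P.coeff i‖

lemma coeff_le_cnorm (P : Polynomial ℂ) (i : ℕ) : ‖P.coeff i‖ ≤ cnorm P := by
  unfold cnorm
  rcases le_or_gt i P.natDegree with h | h
  · exact Finset.le_sup' (fun i => ‖P.coeff i‖) (Finset.mem_range.mpr (by omega))
  · rw [P.coeff_eq_zero_of_natDegree_lt h, norm_zero]
    exact le_trans (norm_nonneg (P.coeff 0))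
      (Finset.le_sup' (fun i => ‖P.coeff i‖) (Finset.mem_range.mpr (by omega)))

lemma cnorm_nonneg (P : Polynomial ℂ) : 0 ≤ cnorm P :=
  le_trans (norm_nonneg _) (coeff_le_cnorm P 0)

lemma cnorm_le {P : Polynomial ℂ} {B : ℝ} (h : ∀ i, i ≤ P.natDegree → ‖P.coeff i‖ ≤ B) :
    cnorm P ≤ B := by
  unfold cnorm
  exact Finset.sup'_le _ _ fun i hi => h i (Nat.lt_succ_iff.mp (Finset.mem_range.mp hi))

lemma cnorm_pos {P : Polynomial ℂ} (h : P ≠ 0) : 0 < cnorm P := by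
  refine lt_of_lt_of_le ?_ (coeff_le_cnorm P P.natDegree)
  simpa [norm_pos_iff] using Polynomial.leadingCoeff_ne_zero.mpr h

lemma hockey (ℓ n : ℕ) : ∑ k ∈ Finset.range n, (ℓ + k).choose ℓ = (ℓ + n).choose (ℓ + 1) := by
  cases n with
  | zero => simp
  | succ n =>
    have := Nat.sum_range_add_choose n ℓ
    rw [show ℓ + (n+1) = n + ℓ + 1 by omega, ← this]
    exact Finset.sum_congr rfl fun k _ => by rw [Nat.add_comm ℓ k]

lemma lemA (P : Polynomial ℂ) (z : ℂ) (D : ℕ) (hD : P.natDegree < D) (i : ℕ) :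
    P.coeff i = ∑ k ∈ Finset.range (D - i), ((X - C z) * P).coeff (i + k + 1) * z ^ k := by
  have hco : ∀ n : ℕ, ((X - C z) * P).coeff (n + 1) = P.coeff n - z * P.coeff (n + 1) := by
    intro n
    rw [sub_mul, Polynomial.coeff_sub, Polynomial.coeff_X_mul, Polynomial.coeff_C_mul]
  rcases le_or_gt D i with h | h
  · rw [Nat.sub_eq_zero_of_le h, Finset.sum_range_zero,
      P.coeff_eq_zero_of_natDegree_lt (by omega)]
  · have : ∀ k, ((X - C z) * P).coeff (i + k + 1) * z ^ k
        = P.coeff (i + k) * z ^ k - P.coeff (i + (k+1)) * z ^ (k+1) := by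
      intro k
      rw [show i + (k+1) = i + k + 1 by omega, hco (i + k)]
      ring
    rw [Finset.sum_congr rfl fun k _ => this k,
      Finset.sum_range_sub' (fun k => P.coeff (i + k) * z ^ k)]
    rw [show i + (D - i) = D by omega, P.coeff_eq_zero_of_natDegree_lt hD]
    simp

lemma lemA' (P : Polynomial ℂ) (z : ℂ) (i : ℕ) :
    P.coeff i * z ^ (i + 1) = -∑ k ∈ Finset.range (i + 1), ((X - C z) * P).coeff k * z ^ k := by
  rw [Finset.sum_range_succ']
  have hco : ∀ n : ℕ, ((X - C z) * P).coeff (n + 1) = P.coeff n - z * P.coeff (n + 1) := by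
    intro n
    rw [sub_mul, Polynomial.coeff_sub, Polynomial.coeff_X_mul, Polynomial.coeff_C_mul]
  have h0 : ((X - C z) * P).coeff 0 = -z * P.coeff 0 := by
    rw [Polynomial.mul_coeff_zero]
    simp
  have : ∀ k, ((X - C z) * P).coeff (k + 1) * z ^ (k+1)
      = P.coeff k * z ^ (k+1) - P.coeff (k+1) * z ^ (k+1+1) := by
    intro k; rw [hco k]; ring
  rw [Finset.sum_congr rfl fun k _ => this k,
    Finset.sum_range_sub' (fun k => P.coeff k * z ^ (k+1)), h0]
  ring

lemma choose_le_two_pow (n k : ℕ) : n.choose k ≤ 2 ^ n := by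
  rcases le_or_gt k n with h | h
  · calc n.choose k ≤ ∑ m ∈ Finset.range (n+1), n.choose m :=
        Finset.single_le_sum (fun i _ => Nat.zero_le _) (Finset.mem_range.mpr (by omega))
    _ = 2 ^ n := Nat.sum_range_choose n
  · rw [Nat.choose_eq_zero_of_lt h]; exact Nat.zero_le _

lemma lemB (z : ℂ) (hz : ‖z‖ ≤ 1) (ℓ : ℕ) :
    ∀ (P : Polynomial ℂ) (i : ℕ),
      ‖P.coeff i‖ ≤ ((P.natDegree + ℓ - i).choose ℓ : ℝ) * cnorm ((X - C z) ^ ℓ * P) := by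
  induction ℓ with
  | zero => intro P i; simpa using coeff_le_cnorm P i
  | succ ℓ IH =>
    intro P i
    by_cases hP : P = 0
    · rw [hP]
      simp only [Polynomial.coeff_zero, norm_zero]
      exact mul_nonneg (Nat.cast_nonneg _) (cnorm_nonneg _)
    set m := P.natDegree with hm
    set Q := (X - C z) * P with hQ
    have hQ0 : Q ≠ 0 := mul_ne_zero (Polynomial.X_sub_C_ne_zero z) hP
    have hQdeg : Q.natDegree = m + 1 := by
      rw [hQ, Polynomial.natDegree_mul (Polynomial.X_sub_C_ne_zero z) hP,
        Polynomial.natDegree_X_sub_C]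
      omega
    have hrw : (X - C z) ^ (ℓ + 1) * P = (X - C z) ^ ℓ * Q := by rw [hQ]; ring
    set N := cnorm ((X - C z) ^ (ℓ + 1) * P) with hN
    have hN' : cnorm ((X - C z) ^ ℓ * Q) = N := by rw [hN, hrw]
    have hNn : 0 ≤ N := cnorm_nonneg _
    rcases lt_or_ge m i with h | h
    · rw [P.coeff_eq_zero_of_natDegree_lt h, norm_zero]
      exact mul_nonneg (Nat.cast_nonneg _) hNn
    have key := lemA P z (m + 1) (by omega) i
    calc ‖P.coeff i‖
        = ‖∑ k ∈ Finset.range (m + 1 - i), Q.coeff (i + k + 1) * z ^ k‖ := by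
          rw [← key]
      _ ≤ ∑ k ∈ Finset.range (m + 1 - i), ‖Q.coeff (i + k + 1) * z ^ k‖ :=
          norm_sum_le _ _
      _ ≤ ∑ k ∈ Finset.range (m + 1 - i), ‖Q.coeff (i + k + 1)‖ := by
          refine Finset.sum_le_sum fun k _ => ?_
          rw [norm_mul, norm_pow]
          exact mul_le_of_le_one_right (norm_nonneg _)
            (pow_le_one₀ (norm_nonneg z) hz)
      _ ≤ ∑ k ∈ Finset.range (m + 1 - i), ((m + ℓ - i - k).choose ℓ : ℝ) * N := by
          refine Finset.sum_le_sum fun k hk => ?_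
          have hk' := Finset.mem_range.mp hk
          have hIH := IH Q (i + k + 1)
          rw [hN', hQdeg] at hIH
          have harg : m + 1 + ℓ - (i + k + 1) = m + ℓ - i - k := by omega
          rwa [harg] at hIH
      _ = ((∑ k ∈ Finset.range (m + 1 - i), (m + ℓ - i - k).choose ℓ : ℕ) : ℝ) * N := by
          rw [← Finset.sum_mul, Nat.cast_sum]
      _ = ((m + (ℓ + 1) - i).choose (ℓ + 1) : ℝ) * N := by
          congr 2
          have hrefl := Finset.sum_range_reflect
            (fun k => (m + ℓ - i - k).choose ℓ) (m + 1 - i)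
          rw [← hrefl]
          have hcg : ∀ k ∈ Finset.range (m + 1 - i),
              (m + ℓ - i - (m + 1 - i - 1 - k)).choose ℓ = (ℓ + k).choose ℓ := by
            intro k hk
            have hk' := Finset.mem_range.mp hk
            congr 1
            omega
          rw [Finset.sum_congr rfl hcg, hockey]
          congr 1
          omega

lemma lemB' (z : ℂ) (hz : 1 ≤ ‖z‖) (ℓ : ℕ) :
    ∀ (P : Polynomial ℂ) (i : ℕ),
      ‖P.coeff i‖ * ‖z‖ ^ ℓ
        ≤ ((i + ℓ).choose ℓ : ℝ) * cnorm ((X - C z) ^ ℓ * P) := by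
  have hz0 : 0 < ‖z‖ := lt_of_lt_of_le one_pos hz
  induction ℓ with
  | zero => intro P i; simpa using coeff_le_cnorm P i
  | succ ℓ IH =>
    intro P i
    set Q := (X - C z) * P with hQ
    have hrw : (X - C z) ^ (ℓ + 1) * P = (X - C z) ^ ℓ * Q := by rw [hQ]; ring
    set N := cnorm ((X - C z) ^ (ℓ + 1) * P) with hN
    have hN' : cnorm ((X - C z) ^ ℓ * Q) = N := by rw [hN, hrw]
    have hNn : 0 ≤ N := cnorm_nonneg _
    have key := lemA' P z i
    have step1 : ‖P.coeff i‖ * ‖z‖ ^ (i + 1)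
        ≤ ∑ k ∈ Finset.range (i + 1), ‖Q.coeff k‖ * ‖z‖ ^ k := by
      calc ‖P.coeff i‖ * ‖z‖ ^ (i + 1)
          = ‖-∑ k ∈ Finset.range (i + 1), Q.coeff k * z ^ k‖ := by
            rw [← key, norm_mul, norm_pow]
        _ ≤ ∑ k ∈ Finset.range (i + 1), ‖Q.coeff k * z ^ k‖ := by
            rw [norm_neg]
            exact norm_sum_le _ _
        _ = ∑ k ∈ Finset.range (i + 1), ‖Q.coeff k‖ * ‖z‖ ^ k := by
            refine Finset.sum_congr rfl fun k _ => ?_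
            rw [norm_mul, norm_pow]
    have step2 : ‖P.coeff i‖ * ‖z‖ ^ (i + 1) * ‖z‖ ^ ℓ
        ≤ (((i + ℓ + 1).choose (ℓ + 1) : ℝ) * N) * ‖z‖ ^ i := by
      calc ‖P.coeff i‖ * ‖z‖ ^ (i + 1) * ‖z‖ ^ ℓ
          ≤ (∑ k ∈ Finset.range (i + 1), ‖Q.coeff k‖ * ‖z‖ ^ k)
              * ‖z‖ ^ ℓ := by
            exact mul_le_mul_of_nonneg_right step1 (pow_nonneg hz0.le ℓ)
        _ = ∑ k ∈ Finset.range (i + 1),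
              (‖Q.coeff k‖ * ‖z‖ ^ ℓ) * ‖z‖ ^ k := by
            rw [Finset.sum_mul]; refine Finset.sum_congr rfl fun k _ => by ring
        _ ≤ ∑ k ∈ Finset.range (i + 1),
              (((k + ℓ).choose ℓ : ℝ) * N) * ‖z‖ ^ i := by
            refine Finset.sum_le_sum fun k hk => ?_
            have hk' := Finset.mem_range.mp hk
            have h1 := IH Q k
            rw [hN'] at h1
            refine mul_le_mul h1 (pow_le_pow_right₀ hz (by omega))
              (pow_nonneg hz0.le _) (mul_nonneg (Nat.cast_nonneg _) hNn)
        _ = (((∑ k ∈ Finset.range (i + 1), (k + ℓ).choose ℓ : ℕ) : ℝ) * N)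
              * ‖z‖ ^ i := by
            rw [← Finset.sum_mul, ← Finset.sum_mul, Nat.cast_sum]
        _ = (((i + ℓ + 1).choose (ℓ + 1) : ℝ) * N) * ‖z‖ ^ i := by
            have hcg : ∑ k ∈ Finset.range (i + 1), (k + ℓ).choose ℓ
                = (i + ℓ + 1).choose (ℓ + 1) := by
              have : ∀ k ∈ Finset.range (i + 1), (k + ℓ).choose ℓ = (ℓ + k).choose ℓ := by
                intro k _; rw [Nat.add_comm k ℓ]
              rw [Finset.sum_congr rfl this, hockey]
              congr 1
              omega
            rw [hcg]
    have hcancel : ‖P.coeff i‖ * ‖z‖ ^ (ℓ + 1) * ‖z‖ ^ i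
        ≤ (((i + (ℓ + 1)).choose (ℓ + 1) : ℝ) * N) * ‖z‖ ^ i := by
      calc ‖P.coeff i‖ * ‖z‖ ^ (ℓ + 1) * ‖z‖ ^ i
          = ‖P.coeff i‖ * ‖z‖ ^ (i + 1) * ‖z‖ ^ ℓ := by
            rw [mul_assoc, mul_assoc, ← pow_add, ← pow_add]
            congr 2
            omega
        _ ≤ (((i + ℓ + 1).choose (ℓ + 1) : ℝ) * N) * ‖z‖ ^ i := step2
        _ = (((i + (ℓ + 1)).choose (ℓ + 1) : ℝ) * N) * ‖z‖ ^ i := rfl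
    exact le_of_mul_le_mul_right hcancel (pow_pos hz0 i)

lemma cnorm_mul_bound (z : ℂ) (ℓ : ℕ) (F : Polynomial ℂ) :
    cnorm F * max 1 (‖z‖) ^ ℓ
      ≤ (2 : ℝ) ^ (F.natDegree + ℓ) * cnorm ((X - C z) ^ ℓ * F) := by
  set m := F.natDegree with hm
  set N := cnorm ((X - C z) ^ ℓ * F) with hN
  have hNn : 0 ≤ N := cnorm_nonneg _
  have hch : ∀ k, k ≤ m + ℓ → ((k.choose ℓ : ℝ) * N ≤ (2 : ℝ) ^ (m + ℓ) * N) := by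
    intro k hk
    refine mul_le_mul_of_nonneg_right ?_ hNn
    calc (k.choose ℓ : ℝ) ≤ (((m + ℓ).choose ℓ : ℕ) : ℝ) :=
          Nat.cast_le.mpr (Nat.choose_le_choose ℓ hk)
      _ ≤ ((2 ^ (m + ℓ) : ℕ) : ℝ) := Nat.cast_le.mpr (choose_le_two_pow _ _)
      _ = (2 : ℝ) ^ (m + ℓ) := by push_cast; ring
  rcases le_total (‖z‖) 1 with hle | hge
  · rw [max_eq_left hle, one_pow, mul_one]
    refine cnorm_le fun i hi => ?_
    calc ‖F.coeff i‖ ≤ ((m + ℓ - i).choose ℓ : ℝ) * N := lemB z hle ℓ F i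
      _ ≤ (2 : ℝ) ^ (m + ℓ) * N := hch _ (by omega)
  · rw [max_eq_right hge]
    have hp : (0 : ℝ) < ‖z‖ ^ ℓ := pow_pos (by linarith) ℓ
    have : cnorm F ≤ ((2 : ℝ) ^ (m + ℓ) * N) / ‖z‖ ^ ℓ := by
      refine cnorm_le fun i hi => ?_
      rw [le_div_iff₀ hp]
      calc ‖F.coeff i‖ * ‖z‖ ^ ℓ
          ≤ ((i + ℓ).choose ℓ : ℝ) * N := lemB' z hge ℓ F i
        _ ≤ (2 : ℝ) ^ (m + ℓ) * N := hch _ (by omega)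
    exact (le_div_iff₀ hp).mp this

set_option maxHeartbeats 400000 in
lemma hasse_bound (t : ℕ) (ht : 0 < t) (z ξ : ℂ) (F : Polynomial ℂ) (ℓ : ℕ)
    (j : ℕ) (hj : j < t) :
    ‖(Polynomial.hasseDeriv j ((X - C z) ^ ℓ * F)).eval ξ‖
      ≤ (1 + ‖ξ - z‖) ^ ℓ *
        (Finset.range t).sup' (Finset.nonempty_range_iff.mpr ht.ne')
          (fun k => ‖(Polynomial.hasseDeriv k F).eval ξ‖) := by
  set M := (Finset.range t).sup' (Finset.nonempty_range_iff.mpr ht.ne')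
    (fun k => ‖(Polynomial.hasseDeriv k F).eval ξ‖) with hMdef
  have hMle : ∀ k, k < t → ‖(Polynomial.hasseDeriv k F).eval ξ‖ ≤ M := by
    intro k hk
    exact Finset.le_sup' (fun k => ‖(Polynomial.hasseDeriv k F).eval ξ‖)
      (Finset.mem_range.mpr hk)
  have hM0 : 0 ≤ M := le_trans (norm_nonneg _) (hMle 0 ht)
  set w := ξ - z with hw
  have htay : Polynomial.taylor ξ ((X - C z) ^ ℓ) = (X + C w) ^ ℓ := by
    rw [Polynomial.taylor_apply, Polynomial.pow_comp, Polynomial.sub_comp,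
      Polynomial.X_comp, Polynomial.C_comp]
    congr 1
    rw [hw, map_sub]
    ring
  rw [← Polynomial.taylor_coeff, Polynomial.taylor_mul, htay, Polynomial.coeff_mul,
    Finset.Nat.sum_antidiagonal_eq_sum_range_succ_mk]
  set g : ℕ → ℝ := fun k => ‖w‖ ^ (ℓ - k) * (ℓ.choose k : ℝ) with hg
  have hgnn : ∀ k, 0 ≤ g k := fun k =>
    mul_nonneg (pow_nonneg (norm_nonneg _) _) (Nat.cast_nonneg _)
  have s1 : ‖∑ k ∈ Finset.range (j + 1),
        ((X + C w) ^ ℓ).coeff k * (Polynomial.taylor ξ F).coeff (j - k)‖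
      ≤ ∑ k ∈ Finset.range (j + 1),
        ‖((X + C w) ^ ℓ).coeff k‖ *
          ‖(Polynomial.taylor ξ F).coeff (j - k)‖ := by
    refine le_trans (norm_sum_le _ _) (le_of_eq ?_)
    exact Finset.sum_congr rfl fun k _ => norm_mul _ _
  have s2 : ∑ k ∈ Finset.range (j + 1),
        ‖((X + C w) ^ ℓ).coeff k‖ *
          ‖(Polynomial.taylor ξ F).coeff (j - k)‖
      ≤ ∑ k ∈ Finset.range (j + 1), g k * M := by
    refine Finset.sum_le_sum fun k hk => ?_
    refine mul_le_mul ?_ ?_ (norm_nonneg _) (hgnn k)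
    · rw [Polynomial.coeff_X_add_C_pow, norm_mul, norm_pow, hg]
      simp [Complex.norm_natCast]
    · rw [Polynomial.taylor_coeff]
      exact hMle _ (by omega)
  have s3 : ∑ k ∈ Finset.range (j + 1), g k * M
      ≤ ∑ k ∈ Finset.range (ℓ + 1), g k * M := by
    have h1 : ∑ k ∈ Finset.range (j + 1), g k * M
        ≤ ∑ k ∈ Finset.range (j + ℓ + 1), g k * M :=
      Finset.sum_le_sum_of_subset_of_nonneg
        (Finset.range_subset_range.mpr (by omega))
        (fun x _ _ => mul_nonneg (hgnn x) hM0)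
    have h2 : ∑ k ∈ Finset.range (ℓ + 1), g k * M
        = ∑ k ∈ Finset.range (j + ℓ + 1), g k * M := by
      refine Finset.sum_subset (Finset.range_subset_range.mpr (by omega)) ?_
      intro x _ hx
      have hlx : ℓ < x := by
        by_contra hc
        exact hx (Finset.mem_range.mpr (by omega))
      rw [hg]
      simp [Nat.choose_eq_zero_of_lt hlx]
    rw [h2]
    exact h1
  have s4 : ∑ k ∈ Finset.range (ℓ + 1), g k * M = (1 + ‖w‖) ^ ℓ * M := by
    rw [← Finset.sum_mul]
    congr 1
    rw [add_pow]
    exact Finset.sum_congr rfl fun k _ => by rw [hg]; simp [one_pow]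
  exact le_trans s1 (le_trans s2 (le_of_le_of_eq s3 s4))

lemma cnorm_X_pow_mul (ℓ : ℕ) (F : Polynomial ℂ) : cnorm (X ^ ℓ * F) = cnorm F := by
  refine le_antisymm (cnorm_le fun i _ => ?_) (cnorm_le fun i _ => ?_)
  · rw [mul_comm, Polynomial.coeff_mul_X_pow']
    split_ifs with h
    · exact coeff_le_cnorm F _
    · simpa using cnorm_nonneg F
  · rw [← Polynomial.coeff_X_pow_mul F ℓ i]
    exact coeff_le_cnorm _ _

theorem stmt_1 (n t : ℕ) (hn : 0 < n) (ht : 0 < t) (z ξ : ℂ) (F : Polynomial ℂ)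
    (hF : F ≠ 0) (hdeg : F.natDegree ≤ n) (ℓ : ℕ)
    (Ft : Polynomial ℂ) (hFt : Ft = (Polynomial.X - Polynomial.C z) ^ ℓ * F) :
    (((Finset.range t).sup' (Finset.nonempty_range_iff.mpr ht.ne') fun j =>
        ‖(Polynomial.hasseDeriv j Ft).eval ξ‖ / cnorm Ft) ≤
      Real.exp (Ft.natDegree : ℝ) * (2 + ‖ξ‖) ^ ℓ *
        ((Finset.range t).sup' (Finset.nonempty_range_iff.mpr ht.ne') fun j =>
          ‖(Polynomial.hasseDeriv j F).eval ξ‖ / cnorm F)) ∧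
    (z = 0 →
      ((Finset.range t).sup' (Finset.nonempty_range_iff.mpr ht.ne') fun j =>
          ‖(Polynomial.hasseDeriv j Ft).eval ξ‖ / cnorm Ft) ≤
        (2 + ‖ξ‖) ^ ℓ *
          ((Finset.range t).sup' (Finset.nonempty_range_iff.mpr ht.ne') fun j =>
            ‖(Polynomial.hasseDeriv j F).eval ξ‖ / cnorm F)) := by
  have hFt0 : Ft ≠ 0 := by
    rw [hFt]
    exact mul_ne_zero (pow_ne_zero _ (Polynomial.X_sub_C_ne_zero z)) hF
  have hcF : 0 < cnorm F := cnorm_pos hF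
  have hcT : 0 < cnorm Ft := cnorm_pos hFt0
  set M := (Finset.range t).sup' (Finset.nonempty_range_iff.mpr ht.ne')
    (fun k => ‖(Polynomial.hasseDeriv k F).eval ξ‖) with hMdef
  set Msup := (Finset.range t).sup' (Finset.nonempty_range_iff.mpr ht.ne')
    (fun j => ‖(Polynomial.hasseDeriv j F).eval ξ‖ / cnorm F) with hMsupdef
  have hM0 : 0 ≤ M :=
    le_trans (norm_nonneg _)
      (Finset.le_sup' (fun k => ‖(Polynomial.hasseDeriv k F).eval ξ‖)
        (Finset.mem_range.mpr ht))
  have hMsup0 : 0 ≤ Msup :=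
    le_trans (div_nonneg (norm_nonneg _) hcF.le)
      (Finset.le_sup' (fun j => ‖(Polynomial.hasseDeriv j F).eval ξ‖ / cnorm F)
        (Finset.mem_range.mpr ht))
  have hMle : M ≤ Msup * cnorm F := by
    refine Finset.sup'_le _ _ fun k hk => ?_
    have h := Finset.le_sup'
      (fun j => ‖(Polynomial.hasseDeriv j F).eval ξ‖ / cnorm F) hk
    exact (div_le_iff₀ hcF).mp h
  have hnd : Ft.natDegree = F.natDegree + ℓ := by
    rw [hFt, Polynomial.natDegree_mul (pow_ne_zero _ (Polynomial.X_sub_C_ne_zero z)) hF,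
      Polynomial.natDegree_pow, Polynomial.natDegree_X_sub_C]
    omega
  have hxnn : (0:ℝ) ≤ 2 + ‖ξ‖ := by positivity
  constructor
  · -- general bound
    have h2e : (2:ℝ) ^ Ft.natDegree ≤ Real.exp (Ft.natDegree : ℝ) := by
      have he : Real.exp ((Ft.natDegree : ℝ)) = Real.exp 1 ^ Ft.natDegree := by
        rw [← Real.exp_nat_mul]
        norm_num
      rw [he]
      exact pow_le_pow_left₀ (by norm_num)
        (by have := Real.add_one_le_exp (1:ℝ); linarith) _
    refine Finset.sup'_le _ _ fun j hj => ?_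
    have hj' := Finset.mem_range.mp hj
    have hb := hasse_bound t ht z ξ F ℓ j hj'
    rw [← hFt] at hb
    have hnorm := cnorm_mul_bound z ℓ F
    rw [← hFt, ← hnd] at hnorm
    rw [div_le_iff₀ hcT]
    have hfac : 1 + ‖ξ - z‖ ≤ (2 + ‖ξ‖) * max 1 (‖z‖) := by
      have h3 : ‖ξ - z‖ ≤ ‖ξ‖ + ‖z‖ := by
        simpa [sub_eq_add_neg, norm_neg] using norm_add_le ξ (-z)
      rcases le_total (‖z‖) 1 with h | h
      · rw [max_eq_left h]
        linarith
      · rw [max_eq_right h]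
        nlinarith [norm_nonneg ξ, norm_nonneg z]
    have hmaxnn : (0:ℝ) ≤ max 1 (‖z‖) := le_trans zero_le_one (le_max_left _ _)
    calc ‖(Polynomial.hasseDeriv j Ft).eval ξ‖
        ≤ (1 + ‖ξ - z‖) ^ ℓ * M := hb
      _ ≤ ((2 + ‖ξ‖) * max 1 (‖z‖)) ^ ℓ * (Msup * cnorm F) := by
          refine mul_le_mul (pow_le_pow_left₀ (by positivity) hfac ℓ) hMle hM0 (by positivity)
      _ = (2 + ‖ξ‖) ^ ℓ * Msup * (cnorm F * max 1 (‖z‖) ^ ℓ) := by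
          rw [mul_pow]; ring
      _ ≤ (2 + ‖ξ‖) ^ ℓ * Msup * ((2:ℝ) ^ Ft.natDegree * cnorm Ft) := by
          refine mul_le_mul_of_nonneg_left hnorm (by positivity)
      _ ≤ (2 + ‖ξ‖) ^ ℓ * Msup * (Real.exp (Ft.natDegree : ℝ) * cnorm Ft) := by
          refine mul_le_mul_of_nonneg_left (mul_le_mul_of_nonneg_right h2e hcT.le)
            (by positivity)
      _ = Real.exp (Ft.natDegree : ℝ) * (2 + ‖ξ‖) ^ ℓ * Msup * cnorm Ft := by
          ring
  · -- z = 0 case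
    intro hz
    subst hz
    have hceq : cnorm Ft = cnorm F := by
      rw [hFt, show ((X : Polynomial ℂ) - C 0) = X by simp, cnorm_X_pow_mul]
    refine Finset.sup'_le _ _ fun j hj => ?_
    have hj' := Finset.mem_range.mp hj
    have hb := hasse_bound t ht 0 ξ F ℓ j hj'
    rw [← hFt] at hb
    rw [hceq, div_le_iff₀ hcF]
    calc ‖(Polynomial.hasseDeriv j Ft).eval ξ‖
        ≤ (1 + ‖ξ - 0‖) ^ ℓ * M := hb
      _ ≤ (2 + ‖ξ‖) ^ ℓ * (Msup * cnorm F) := by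
          refine mul_le_mul (pow_le_pow_left₀ (by positivity) (by rw [sub_zero]; linarith) ℓ)
            hMle hM0 (by positivity)
      _ = (2 + ‖ξ‖) ^ ℓ * Msup * cnorm F := by ring
end

section
/- Let c, n, X be positive reals with e^n ≤ X, let ξ₁, ..., ξ_s be complex numbers, and let R ∈ ℚ[T] be an irreducible polynomial with deg(R) ≤ n, H(R) ≤ X² and ∏_{i=1}^s |R(ξ_i)|/cont(R) < (X^{deg(R)} H(R)^n)^{−c/2}. Then there exists an integer k ≥ 1 such that Q = R^k satisfies deg(Q) ≤ n, H(Q) ≤ X², and ∏_{i=1}^s |Q(ξ_i)|/cont(Q) < X^{−cn/4}. -/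
/-- Norm of a rational polynomial: maximum absolute value of its coefficients. -/
noncomputable def qnorm (P : Polynomial ℚ) : ℚ :=
  (Finset.range (P.natDegree + 1)).sup' Finset.nonempty_range_add_one fun i => |P.coeff i|

/-- Content of a rational polynomial: the unique positive rational `r` (for `P ≠ 0`) such
that `P / r` is a primitive integer polynomial. -/
noncomputable def qcont (P : Polynomial ℚ) : ℚ :=
  let d : ℤ := (Finset.range (P.natDegree + 1)).lcm fun i => ((P.coeff i).den : ℤ)
  (((Finset.range (P.natDegree + 1)).gcd fun i => (P.coeff i * (d : ℚ)).num : ℤ) : ℚ) / (d : ℚ)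

/-- Height of a rational polynomial: `H(P) = ‖P‖ / cont(P)`. -/
noncomputable def qheight (P : Polynomial ℚ) : ℚ := qnorm P / qcont P

open Polynomial


open Polynomial

lemma rat_mul_den_den_one (q : ℚ) (d : ℤ) (h : (q.den : ℤ) ∣ d) : (q * (d : ℚ)).den = 1 := by
  obtain ⟨e, rfl⟩ := h
  have hq : q * (q.den : ℚ) = (q.num : ℚ) :=
    ((div_eq_iff (show ((q.den : ℚ)) ≠ 0 from Nat.cast_ne_zero.2 q.den_ne_zero)).1
      (Rat.num_div_den q)).symm
  have : q * ((q.den : ℤ) * e : ℤ) = ((q.num * e : ℤ) : ℚ) := by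
    push_cast
    rw [← mul_assoc, hq]
  rw [this, Rat.den_intCast]

noncomputable def toInt (P : Polynomial ℚ) (d : ℤ) : Polynomial ℤ :=
  ∑ i ∈ Finset.range (P.natDegree + 1), C ((P.coeff i * (d : ℚ)).num) * X ^ i

lemma coeff_toInt (P : Polynomial ℚ) (d : ℤ) (j : ℕ) :
    (toInt P d).coeff j = if j ≤ P.natDegree then (P.coeff j * (d : ℚ)).num else 0 := by
  unfold toInt
  rw [finset_sum_coeff]
  simp only [coeff_C_mul, coeff_X_pow, mul_ite, mul_one, mul_zero]
  rw [Finset.sum_ite_eq (Finset.range (P.natDegree + 1))]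
  simp [Nat.lt_succ_iff]

lemma map_toInt (P : Polynomial ℚ) (d : ℤ)
    (hden : ∀ i, (P.coeff i * (d : ℚ)).den = 1) :
    (toInt P d).map (Int.castRingHom ℚ) = C (d : ℚ) * P := by
  ext j
  rw [coeff_map, coeff_toInt, coeff_C_mul]
  split_ifs with h
  · rw [eq_intCast, (Rat.den_eq_one_iff _).1 (hden j), mul_comm]
  · rw [P.coeff_eq_zero_of_natDegree_lt (not_le.1 h), mul_zero, eq_intCast, Int.cast_zero]
lemma qnorm_nonneg (P : Polynomial ℚ) : 0 ≤ qnorm P := by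
  unfold qnorm
  exact le_trans (abs_nonneg (P.coeff 0))
    (Finset.le_sup' (fun i => |P.coeff i|)
      (show 0 ∈ Finset.range (P.natDegree + 1) by simp))

lemma abs_coeff_le_qnorm (P : Polynomial ℚ) (i : ℕ) : |P.coeff i| ≤ qnorm P := by
  rcases le_or_gt i P.natDegree with h | h
  · exact Finset.le_sup' (α := ℚ) _ (Finset.mem_range.2 (Nat.lt_succ_of_le h))
  · rw [P.coeff_eq_zero_of_natDegree_lt h, abs_zero]
    exact qnorm_nonneg P

lemma qnorm_mul_le (P Q : Polynomial ℚ) :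
    qnorm (P * Q) ≤ (P.natDegree + 1) * qnorm P * qnorm Q := by
  unfold qnorm
  apply Finset.sup'_le
  intro i _
  rw [coeff_mul]
  calc |∑ x ∈ Finset.HasAntidiagonal.antidiagonal i, P.coeff x.1 * Q.coeff x.2|
      ≤ ∑ x ∈ Finset.HasAntidiagonal.antidiagonal i, |P.coeff x.1 * Q.coeff x.2| :=
        Finset.abs_sum_le_sum_abs _ _
    _ = ∑ x ∈ (Finset.HasAntidiagonal.antidiagonal i).filter (fun x => x.1 ≤ P.natDegree),
          |P.coeff x.1 * Q.coeff x.2| := by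
        refine (Finset.sum_subset (Finset.filter_subset _ _) ?_).symm
        intro x hx hx'
        simp only [Finset.mem_filter, not_and, not_le] at hx'
        rw [P.coeff_eq_zero_of_natDegree_lt (hx' hx), zero_mul, abs_zero]
    _ ≤ ∑ _x ∈ (Finset.HasAntidiagonal.antidiagonal i).filter (fun x => x.1 ≤ P.natDegree),
          qnorm P * qnorm Q := by
        apply Finset.sum_le_sum
        intro x _
        rw [abs_mul]
        exact mul_le_mul (abs_coeff_le_qnorm P _) (abs_coeff_le_qnorm Q _)
          (abs_nonneg _) (qnorm_nonneg P)
    _ ≤ (P.natDegree + 1) * (qnorm P * qnorm Q) := by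
        rw [Finset.sum_const, nsmul_eq_mul]
        apply mul_le_mul_of_nonneg_right _ (mul_nonneg (qnorm_nonneg P) (qnorm_nonneg Q))
        have : ((Finset.HasAntidiagonal.antidiagonal i).filter (fun x => x.1 ≤ P.natDegree)).card
            ≤ (Finset.range (P.natDegree + 1)).card := by
          apply Finset.card_le_card_of_injOn (fun x => x.1)
          · intro x hx
            simp only [Finset.mem_coe, Finset.mem_filter] at hx
            exact Finset.mem_range.2 (Nat.lt_succ_of_le hx.2)
          · intro x hx y hy hxy
            have hx' := (Finset.mem_filter.1 hx).1
            have hy' := (Finset.mem_filter.1 hy).1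
            rw [Finset.HasAntidiagonal.mem_antidiagonal] at hx' hy'
            have hxy2 : x.1 = y.1 := hxy
            have : x.2 = y.2 := by omega
            exact Prod.ext hxy2 this
        rw [Finset.card_range] at this
        exact_mod_cast this
    _ = (P.natDegree + 1) * qnorm P * qnorm Q := by ring

lemma rat_num_cast_eq (q : ℚ) : (q.num : ℚ) = q * (q.den : ℚ) :=
  (div_eq_iff (show ((q.den : ℚ)) ≠ 0 from Nat.cast_ne_zero.2 q.den_ne_zero)).1
    (Rat.num_div_den q)

lemma repr_unique (r r' : ℚ) (hr : 0 < r) (hr' : 0 < r') (q q' : Polynomial ℤ)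
    (hq : q.IsPrimitive) (hq' : q'.IsPrimitive)
    (h : C r * q.map (Int.castRingHom ℚ) = C r' * q'.map (Int.castRingHom ℚ)) : r = r' := by
  have key : (C (r.num * (r'.den : ℤ)) * q).map (Int.castRingHom ℚ)
      = (C (r'.num * (r.den : ℤ)) * q').map (Int.castRingHom ℚ) := by
    rw [Polynomial.map_mul, Polynomial.map_mul, map_C, map_C]
    have e1 : ((r.num * (r'.den : ℤ) : ℤ) : ℚ) = ((r.den : ℚ) * (r'.den : ℚ)) * r := by
      push_cast; rw [rat_num_cast_eq]; ring
    have e2 : ((r'.num * (r.den : ℤ) : ℤ) : ℚ) = ((r.den : ℚ) * (r'.den : ℚ)) * r' := by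
      push_cast; rw [rat_num_cast_eq]; ring
    simp only [eq_intCast]
    rw [e1, e2, C_mul, C_mul, mul_assoc, mul_assoc, h, C_mul, C_mul]
    ring
  have key2 : C (r.num * (r'.den : ℤ)) * q = C (r'.num * (r.den : ℤ)) * q' :=
    Polynomial.map_injective _ Int.cast_injective key
  have hc := congrArg Polynomial.content key2
  rw [content_C_mul, content_C_mul, hq.content_eq_one, hq'.content_eq_one, mul_one, mul_one,
    ← Int.abs_eq_normalize, ← Int.abs_eq_normalize,
    abs_of_pos (mul_pos (Rat.num_pos.2 hr) (by exact_mod_cast r'.den_pos)),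
    abs_of_pos (mul_pos (Rat.num_pos.2 hr') (by exact_mod_cast r.den_pos))] at hc
  have hcq : ((r.num : ℚ)) * (r'.den : ℚ) = ((r'.num : ℚ)) * (r.den : ℚ) := by
    exact_mod_cast hc
  rw [rat_num_cast_eq, rat_num_cast_eq] at hcq
  have hd1 : ((r.den : ℚ)) ≠ 0 := Nat.cast_ne_zero.2 r.den_ne_zero
  have hd2 : ((r'.den : ℚ)) ≠ 0 := Nat.cast_ne_zero.2 r'.den_ne_zero
  have : r * ((r.den : ℚ) * (r'.den : ℚ)) = r' * ((r.den : ℚ) * (r'.den : ℚ)) := by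
    linear_combination hcq
  exact mul_right_cancel₀ (mul_ne_zero hd1 hd2) this

lemma qcont_repr (P : Polynomial ℚ) (hP : P ≠ 0) :
    0 < qcont P ∧ ∃ q : Polynomial ℤ, q.IsPrimitive ∧
      C (qcont P) * q.map (Int.castRingHom ℚ) = P := by
  set d : ℤ := (Finset.range (P.natDegree + 1)).lcm fun i => ((P.coeff i).den : ℤ) with hd_def
  have hd0 : d ≠ 0 := by
    rw [hd_def, Ne, Finset.lcm_eq_zero_iff]
    rintro ⟨i, -, hi⟩
    exact (P.coeff i).den_ne_zero (by exact_mod_cast hi)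
  have hdpos : 0 < d :=
    lt_of_le_of_ne (Int.nonneg_of_normalize_eq_self Finset.normalize_lcm) (Ne.symm hd0)
  have hden : ∀ i, (P.coeff i * (d : ℚ)).den = 1 := by
    intro i
    rcases le_or_gt i P.natDegree with h | h
    · exact rat_mul_den_den_one _ _ (Finset.dvd_lcm (Finset.mem_range.2 (Nat.lt_succ_of_le h)))
    · rw [P.coeff_eq_zero_of_natDegree_lt h, zero_mul]
      rfl
  have hmap : (toInt P d).map (Int.castRingHom ℚ) = C (d : ℚ) * P := map_toInt P d hden
  have hdQ : ((d : ℚ)) ≠ 0 := Int.cast_ne_zero.2 hd0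
  have hQ0 : toInt P d ≠ 0 := by
    intro h
    apply hP
    rw [h, Polynomial.map_zero] at hmap
    exact (mul_eq_zero.1 hmap.symm).resolve_left (by simpa using hdQ)
  have hdeg : (toInt P d).natDegree = P.natDegree := by
    have h1 := Polynomial.natDegree_map_eq_of_injective
      (show Function.Injective (Int.castRingHom ℚ) from Int.cast_injective) (toInt P d)
    rw [hmap, natDegree_C_mul hdQ] at h1
    exact h1.symm
  set g : ℤ := (toInt P d).content with hg_def
  have hgpos : 0 < g := lt_of_le_of_ne
    (Int.nonneg_of_normalize_eq_self Polynomial.normalize_content)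
    (Ne.symm (mt content_eq_zero_iff.1 hQ0))
  have hqc : qcont P = (g : ℚ) / (d : ℚ) := by
    have hgg : g = (Finset.range (P.natDegree + 1)).gcd fun i => (P.coeff i * (d : ℚ)).num := by
      rw [hg_def, content_eq_gcd_range_succ, hdeg]
      refine Finset.gcd_congr rfl fun i hi => ?_
      rw [Finset.mem_range, Nat.lt_succ_iff] at hi
      rw [coeff_toInt, if_pos hi]
    rw [show qcont P = (((Finset.range (P.natDegree + 1)).gcd
        fun i => (P.coeff i * (d : ℚ)).num : ℤ) : ℚ) / (d : ℚ) from rfl, ← hgg]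
  have hrep : C (d : ℚ) * P = C (g : ℚ) * ((toInt P d).primPart.map (Int.castRingHom ℚ)) := by
    conv_lhs => rw [← hmap, (toInt P d).eq_C_content_mul_primPart]
    rw [Polynomial.map_mul, map_C]
    simp [hg_def]
  refine ⟨by rw [hqc]; positivity, (toInt P d).primPart, (toInt P d).isPrimitive_primPart, ?_⟩
  rw [hqc]
  apply mul_left_cancel₀ (show (C ((d : ℚ))) ≠ 0 by simpa using hdQ)
  rw [hrep, ← mul_assoc, ← C_mul, mul_div_cancel₀ _ hdQ]

lemma qcont_pos (P : Polynomial ℚ) (hP : P ≠ 0) : 0 < qcont P := (qcont_repr P hP).1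

lemma qcont_spec (P : Polynomial ℚ) (hP : P ≠ 0) (r : ℚ) (hr : 0 < r) (q : Polynomial ℤ)
    (hq : q.IsPrimitive) (h : C r * q.map (Int.castRingHom ℚ) = P) : qcont P = r := by
  obtain ⟨hpos, q', hq', hrep⟩ := qcont_repr P hP
  exact repr_unique _ _ hpos hr q' q hq' hq (hrep.trans h.symm)

lemma qcont_mul (P Q : Polynomial ℚ) (hP : P ≠ 0) (hQ : Q ≠ 0) :
    qcont (P * Q) = qcont P * qcont Q := by
  obtain ⟨hp, q, hq, hrp⟩ := qcont_repr P hP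
  obtain ⟨hp', q', hq', hrp'⟩ := qcont_repr Q hQ
  refine qcont_spec _ (mul_ne_zero hP hQ) _ (mul_pos hp hp') (q * q') (hq.mul hq') ?_
  rw [Polynomial.map_mul, C_mul]
  conv_rhs => rw [← hrp, ← hrp']
  ring

lemma qcont_pow (P : Polynomial ℚ) (hP : P ≠ 0) (k : ℕ) : qcont (P ^ k) = qcont P ^ k := by
  induction k with
  | zero =>
    simp only [pow_zero]
    exact qcont_spec _ one_ne_zero _ one_pos 1 isPrimitive_one (by simp)
  | succ k ih => rw [pow_succ, qcont_mul _ _ (pow_ne_zero _ hP) hP, ih, pow_succ]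

lemma qcont_le_qnorm (P : Polynomial ℚ) (hP : P ≠ 0) : qcont P ≤ qnorm P := by
  obtain ⟨hpos, q, hq, hrep⟩ := qcont_repr P hP
  have hq0 : q ≠ 0 := by
    intro h
    rw [h, Polynomial.map_zero, mul_zero] at hrep
    exact hP hrep.symm
  have hlc : q.coeff q.natDegree ≠ 0 := by
    have := Polynomial.leadingCoeff_ne_zero.2 hq0
    rwa [Polynomial.leadingCoeff] at this
  have h1 : (1 : ℚ) ≤ |((q.coeff q.natDegree : ℤ) : ℚ)| := by
    rw [← Int.cast_abs]
    exact_mod_cast Int.one_le_abs (by exact_mod_cast hlc)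
  have hco : P.coeff q.natDegree = qcont P * (q.coeff q.natDegree : ℚ) := by
    conv_lhs => rw [← hrep]
    rw [coeff_C_mul, coeff_map, eq_intCast]
  calc qcont P = qcont P * 1 := (mul_one _).symm
    _ ≤ |qcont P * ((q.coeff q.natDegree : ℤ) : ℚ)| := by
        rw [abs_mul, abs_of_pos hpos]
        exact mul_le_mul_of_nonneg_left h1 hpos.le
    _ = |P.coeff q.natDegree| := by rw [hco]
    _ ≤ qnorm P := abs_coeff_le_qnorm P _

lemma one_le_qheight (P : Polynomial ℚ) (hP : P ≠ 0) : 1 ≤ qheight P := by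
  rw [qheight, le_div_iff₀ (qcont_pos P hP), one_mul]
  exact qcont_le_qnorm P hP

lemma qnorm_pow_le (P : Polynomial ℚ) (k : ℕ) (hk : 1 ≤ k) :
    qnorm (P ^ k) ≤ ((P.natDegree : ℚ) + 1) ^ (k - 1) * qnorm P ^ k := by
  induction k with
  | zero => omega
  | succ k ih =>
    rcases Nat.eq_zero_or_pos k with rfl | hk1
    · simp [pow_one]
    · have hkk := ih hk1
      calc qnorm (P ^ (k + 1)) = qnorm (P * P ^ k) := by rw [← pow_succ']
        _ ≤ ((P.natDegree : ℚ) + 1) * qnorm P * qnorm (P ^ k) := qnorm_mul_le _ _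
        _ ≤ ((P.natDegree : ℚ) + 1) * qnorm P *
            (((P.natDegree : ℚ) + 1) ^ (k - 1) * qnorm P ^ k) := by
          exact mul_le_mul_of_nonneg_left hkk
            (mul_nonneg (by positivity) (qnorm_nonneg P))
        _ ≤ ((P.natDegree : ℚ) + 1) ^ (k + 1 - 1) * qnorm P ^ (k + 1) := by
          rw [show k + 1 - 1 = (k - 1) + 1 by omega, pow_succ, pow_succ]
          exact le_of_eq (by ring)

lemma qheight_pow_le (P : Polynomial ℚ) (hP : P ≠ 0) (k : ℕ) (hk : 1 ≤ k) :
    qheight (P ^ k) ≤ ((P.natDegree : ℚ) + 1) ^ (k - 1) * qheight P ^ k := by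
  rw [qheight, qheight, qcont_pow P hP k, div_pow, ← mul_div_assoc]
  rw [div_le_div_iff₀ (pow_pos (qcont_pos P hP) k) (pow_pos (qcont_pos P hP) k)]
  exact mul_le_mul_of_nonneg_right (qnorm_pow_le P k hk) (pow_pos (qcont_pos P hP) k).le

lemma exists_good_k (n L h : ℝ) (D : ℕ) (hD : 1 ≤ D) (hnD : (D : ℝ) ≤ n) (hL : 0 < L)
    (hh : 0 ≤ h) :
    ∃ k : ℕ, 1 ≤ k ∧ (k : ℝ) * D ≤ n ∧ (k = 1 ∨ (k : ℝ) * h ≤ L) ∧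
      n * L / 2 ≤ (k : ℝ) * ((D : ℝ) * L + n * h) := by
  have hD1 : (1 : ℝ) ≤ (D : ℝ) := by exact_mod_cast hD
  have hn0 : 0 < n := lt_of_lt_of_le zero_lt_one (le_trans hD1 hnD)
  rcases le_or_gt L (2 * h) with hcase | hcase
  · refine ⟨1, le_refl 1, by simpa using hnD, Or.inl rfl, ?_⟩
    push_cast
    nlinarith
  · -- 2h < L
    have floornD : 1 ≤ ⌊n / (D : ℝ)⌋₊ := by
      apply Nat.le_floor
      rw [Nat.cast_one, le_div_iff₀ (by positivity)]
      simpa using hnD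
    have floornD_le : (⌊n / (D : ℝ)⌋₊ : ℝ) * D ≤ n := by
      rw [← le_div_iff₀ (by positivity : (0:ℝ) < (D:ℝ))]
      exact Nat.floor_le (by positivity)
    have floornD_ge : n / 2 ≤ (⌊n / (D : ℝ)⌋₊ : ℝ) * D := by
      have hDpos : (0:ℝ) < (D:ℝ) := by positivity
      rcases le_or_gt ((D : ℝ)) (n / 2) with hD2 | hD2
      · have h1 : n / (D : ℝ) - 1 < (⌊n / (D : ℝ)⌋₊ : ℝ) := Nat.sub_one_lt_floor _
        have h2 := mul_lt_mul_of_pos_right h1 hDpos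
        rw [sub_mul, div_mul_cancel₀ _ hDpos.ne', one_mul] at h2
        linarith
      · have h1 : (1 : ℝ) ≤ (⌊n / (D : ℝ)⌋₊ : ℝ) := by exact_mod_cast floornD
        nlinarith
    rcases eq_or_lt_of_le hh with hh0 | hh0
    · refine ⟨⌊n / (D : ℝ)⌋₊, floornD, floornD_le, Or.inr ?_, ?_⟩
      · rw [← hh0, mul_zero]; exact hL.le
      · rw [← hh0]
        have hint := mul_le_mul_of_nonneg_right floornD_ge hL.le
        nlinarith
    · set k := min ⌊n / (D : ℝ)⌋₊ ⌊L / h⌋₊ with hkdef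
      have floorLh : 1 ≤ ⌊L / h⌋₊ := by
        apply Nat.le_floor
        rw [Nat.cast_one, le_div_iff₀ hh0]
        linarith
      have hk1 : 1 ≤ k := le_min floornD floorLh
      have hkle1 : (k : ℝ) ≤ (⌊n / (D : ℝ)⌋₊ : ℝ) := by exact_mod_cast min_le_left _ _
      have hkle2 : (k : ℝ) ≤ (⌊L / h⌋₊ : ℝ) := by exact_mod_cast min_le_right _ _
      have hkD : (k : ℝ) * D ≤ n :=
        le_trans (mul_le_mul_of_nonneg_right hkle1 (by positivity)) floornD_le
      have hkh : (k : ℝ) * h ≤ L := by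
        have h2 : (⌊L / h⌋₊ : ℝ) * h ≤ L := by
          have := mul_le_mul_of_nonneg_right
            (Nat.floor_le (show (0:ℝ) ≤ L / h by positivity)) hh
          rwa [div_mul_cancel₀ _ hh0.ne'] at this
        exact le_trans (mul_le_mul_of_nonneg_right hkle2 hh) h2
      refine ⟨k, hk1, hkD, Or.inr hkh, ?_⟩
      rcases min_cases ⌊n / (D : ℝ)⌋₊ ⌊L / h⌋₊ with ⟨hmin, -⟩ | ⟨hmin, -⟩ <;>
          rw [hkdef, hmin]
      · have hpos : (0:ℝ) ≤ (⌊n / (D : ℝ)⌋₊ : ℝ) * (n * h) := by positivity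
        have hint := mul_le_mul_of_nonneg_right floornD_ge hL.le
        nlinarith
      · have h1 : L / h - 1 < (⌊L / h⌋₊ : ℝ) := Nat.sub_one_lt_floor _
        have h2 := mul_lt_mul_of_pos_right h1 hh0
        rw [sub_mul, div_mul_cancel₀ _ hh0.ne', one_mul] at h2
        have h3 : L / 2 ≤ (⌊L / h⌋₊ : ℝ) * h := by linarith
        have hint := mul_le_mul_of_nonneg_left h3 hn0.le
        have hpos : (0:ℝ) ≤ (⌊L / h⌋₊ : ℝ) * ((D:ℝ) * L) := by positivity
        nlinarith

theorem stmt_15 (c n X : ℝ) (hc : 0 < c) (hn : 0 < n) (hX : Real.exp n ≤ X)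
    (s : ℕ) (ξ : Fin s → ℂ) (R : Polynomial ℚ) (hR : Irreducible R)
    (hdeg : (R.natDegree : ℝ) ≤ n) (hht : (qheight R : ℝ) ≤ X ^ (2 : ℝ))
    (hsmall : ∏ i, ‖Polynomial.aeval (ξ i) R‖ / (qcont R : ℝ) <
      (X ^ (R.natDegree : ℝ) * (qheight R : ℝ) ^ n) ^ (-(c / 2))) :
    ∃ k : ℕ, 1 ≤ k ∧
      ((R ^ k).natDegree : ℝ) ≤ n ∧
      (qheight (R ^ k) : ℝ) ≤ X ^ (2 : ℝ) ∧
      ∏ i, ‖Polynomial.aeval (ξ i) (R ^ k)‖ / (qcont (R ^ k) : ℝ) <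
        X ^ (-(c * n / 4)) := by
  have hR0 : R ≠ 0 := hR.ne_zero
  have hD1 : 1 ≤ R.natDegree := hR.natDegree_pos
  have hX1 : (1 : ℝ) < X := lt_of_lt_of_le (Real.one_lt_exp_iff.2 hn) hX
  have hX0 : (0 : ℝ) < X := lt_trans one_pos hX1
  set L := Real.log X with hLdef
  have hL : 0 < L := Real.log_pos hX1
  have hH1 : (1 : ℚ) ≤ qheight R := one_le_qheight R hR0
  have hH1' : (1 : ℝ) ≤ (qheight R : ℝ) := by exact_mod_cast hH1
  have hH0 : (0 : ℝ) < (qheight R : ℝ) := lt_of_lt_of_le zero_lt_one hH1'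
  set h := Real.log (qheight R : ℝ) with hhdef
  have hh : 0 ≤ h := Real.log_nonneg hH1'
  obtain ⟨k, hk1, hkD, hkopt, hk4⟩ := exists_good_k n L h R.natDegree hD1 hdeg hL hh
  have hk0 : k ≠ 0 := by omega
  refine ⟨k, hk1, ?_, ?_, ?_⟩
  · rw [Polynomial.natDegree_pow]
    push_cast
    exact hkD
  · rcases hkopt with rfl | hkh
    · rw [pow_one]
      exact hht
    · have hq : ((qheight (R ^ k) : ℝ)) ≤
          ((R.natDegree : ℝ) + 1) ^ (k - 1) * (qheight R : ℝ) ^ k := by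
        exact_mod_cast qheight_pow_le R hR0 k hk1
      have hb1 : ((R.natDegree : ℝ) + 1) ^ (k - 1) ≤ X := by
        calc ((R.natDegree : ℝ) + 1) ^ (k - 1) ≤ (Real.exp (R.natDegree : ℝ)) ^ (k - 1) :=
            pow_le_pow_left₀ (by positivity) (Real.add_one_le_exp _) _
          _ = Real.exp (((k - 1 : ℕ) : ℝ) * (R.natDegree : ℝ)) := (Real.exp_nat_mul _ _).symm
          _ ≤ Real.exp n := by
            apply Real.exp_le_exp.2
            have hle : (((k - 1 : ℕ) : ℝ)) ≤ (k : ℝ) := by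
              exact_mod_cast Nat.sub_le k 1
            calc (((k - 1 : ℕ) : ℝ)) * (R.natDegree : ℝ)
                ≤ (k : ℝ) * (R.natDegree : ℝ) :=
                  mul_le_mul_of_nonneg_right hle (by positivity)
              _ ≤ n := hkD
          _ ≤ X := hX
      have hb2 : (qheight R : ℝ) ^ k ≤ X := by
        have : (qheight R : ℝ) = Real.exp h := (Real.exp_log hH0).symm
        rw [this, ← Real.exp_nat_mul]
        calc Real.exp ((k : ℝ) * h) ≤ Real.exp L := Real.exp_le_exp.2 hkh
          _ = X := Real.exp_log hX0
      calc ((qheight (R ^ k) : ℝ)) ≤ ((R.natDegree : ℝ) + 1) ^ (k - 1) * (qheight R : ℝ) ^ k :=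
          hq
        _ ≤ X * X := mul_le_mul hb1 hb2 (by positivity) hX0.le
        _ = X ^ (2 : ℝ) := by
          rw [show (2 : ℝ) = ((2 : ℕ) : ℝ) by norm_num, Real.rpow_natCast]
          ring
  · have hcont : ((qcont (R ^ k) : ℝ)) = (qcont R : ℝ) ^ k := by
      exact_mod_cast qcont_pow R hR0 k
    have hcpos : (0 : ℝ) < (qcont R : ℝ) := by exact_mod_cast qcont_pos R hR0
    have hprod : ∏ i, ‖Polynomial.aeval (ξ i) (R ^ k)‖ / (qcont (R ^ k) : ℝ)
        = (∏ i, ‖Polynomial.aeval (ξ i) R‖ / (qcont R : ℝ)) ^ k := by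
      rw [← Finset.prod_pow]
      refine Finset.prod_congr rfl fun i _ => ?_
      rw [map_pow, norm_pow, hcont, div_pow]
    set π := ∏ i, ‖Polynomial.aeval (ξ i) R‖ / (qcont R : ℝ) with hπ
    have hπ0 : 0 ≤ π :=
      Finset.prod_nonneg fun i _ => div_nonneg (norm_nonneg _) hcpos.le
    have hsmall' : π < Real.exp ((L * (R.natDegree : ℝ) + h * n) * (-(c / 2))) := by
      calc π < (X ^ ((R.natDegree : ℝ)) * (qheight R : ℝ) ^ n) ^ (-(c / 2)) := hsmall
        _ = Real.exp ((L * (R.natDegree : ℝ) + h * n) * (-(c / 2))) := by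
          rw [Real.rpow_def_of_pos hX0, Real.rpow_def_of_pos hH0, ← Real.exp_add,
            Real.rpow_def_of_pos (Real.exp_pos _), Real.log_exp]
    rw [hprod]
    calc π ^ k < (Real.exp ((L * (R.natDegree : ℝ) + h * n) * (-(c / 2)))) ^ k :=
        pow_lt_pow_left₀ hsmall' hπ0 hk0
      _ = Real.exp ((k : ℝ) * ((L * (R.natDegree : ℝ) + h * n) * (-(c / 2)))) :=
        (Real.exp_nat_mul _ _).symm
      _ ≤ Real.exp (L * (-(c * n / 4))) := by
        apply Real.exp_le_exp.2
        nlinarith [mul_le_mul_of_nonneg_left hk4 (le_of_lt (half_pos hc))]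
      _ = X ^ (-(c * n / 4)) := (Real.rpow_def_of_pos hX0 _).symm
end
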